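/- For every N ≥ 1 and every z ∈ ℂ, one has |e_N(Nz) − e^{Nz} 𝟙_{|z|≤1}| ≤ r_N(z), where r_N(z) := (e^N/√(2πN)) |z|^N [ (N+1)/(N(1−|z|)+1) · 𝟙_{|z|≤1} + N/(N(|z|−1)+1) · 𝟙_{|z|>1} ]. -/

import Mathlib

lemma stirling_lb (N : ℕ) (hN : 1 ≤ N) :
    ((N:ℝ))^N / N.factorial ≤ Real.exp N / Real.sqrt (2 * Real.pi * N) := by
  obtain ⟨m, rfl⟩ : ∃ m, N = m + 1 := ⟨N - 1, (Nat.succ_pred_eq_of_pos hN).symm⟩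
  set N := m + 1
  have hNpos : (0:ℝ) < N := by positivity
  have hspos : ∀ n : ℕ, 0 < Stirling.stirlingSeq (n+1) := by
    intro n
    unfold Stirling.stirlingSeq
    positivity
  have hanti : Antitone (fun n => Stirling.stirlingSeq (n+1)) := by
    intro a b hab
    have := Stirling.log_stirlingSeq'_antitone hab
    simp only [Function.comp] at this
    exact (Real.log_le_log_iff (hspos b) (hspos a)).mp this
  have htend : Filter.Tendsto (fun n => Stirling.stirlingSeq (n+1)) Filter.atTop
      (nhds (Real.sqrt Real.pi)) :=
    Stirling.tendsto_stirlingSeq_sqrt_pi.comp (Filter.tendsto_add_atTop_nat 1)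
  have hge : Real.sqrt Real.pi ≤ Stirling.stirlingSeq N := hanti.le_of_tendsto htend m
  rw [Stirling.stirlingSeq] at hge
  have hd : (0:ℝ) < Real.sqrt (2*N) * ((N:ℝ)/Real.exp 1)^N := by positivity
  have hfac : Real.sqrt Real.pi * (Real.sqrt (2*N) * ((N:ℝ)/Real.exp 1)^N) ≤ N.factorial := by
    rw [le_div_iff₀ hd] at hge
    linarith
  have hsq : Real.sqrt Real.pi * Real.sqrt (2*N) = Real.sqrt (2*Real.pi*N) := by
    rw [← Real.sqrt_mul Real.pi_nonneg]
    ring_nf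
  have hD : (0:ℝ) < Real.sqrt (2*Real.pi*N) * ((N:ℝ)/Real.exp 1)^N := by positivity
  have h2 : Real.sqrt (2*Real.pi*N) * ((N:ℝ)/Real.exp 1)^N ≤ N.factorial := by
    rw [← hsq]; linarith [hfac]
  calc ((N:ℝ))^N / N.factorial
      ≤ ((N:ℝ))^N / (Real.sqrt (2*Real.pi*N) * ((N:ℝ)/Real.exp 1)^N) :=
        div_le_div_of_nonneg_left (by positivity) hD h2
    _ = Real.exp N / Real.sqrt (2*Real.pi*N) := by
        rw [div_pow, ← Real.exp_one_pow]
        field_simp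

/-- Truncated exponential series, complex argument. -/
noncomputable def eC (N : ℕ) (w : ℂ) : ℂ := ∑ ℓ ∈ Finset.range N, w ^ ℓ / (Nat.factorial ℓ)

theorem stmt18 (N : ℕ) (hN : 1 ≤ N) (z : ℂ) :
    ‖eC N ((N : ℂ) * z)
        - (if ‖z‖ ≤ 1 then Complex.exp ((N : ℂ) * z) else 0)‖
      ≤ Real.exp N / Real.sqrt (2 * Real.pi * N) * ‖z‖ ^ N *
          (if ‖z‖ ≤ 1 then ((N : ℝ) + 1) / ((N : ℝ) * (1 - ‖z‖) + 1)
           else (N : ℝ) / ((N : ℝ) * (‖z‖ - 1) + 1)) := by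
  set t := ‖z‖ with ht
  set w := (N : ℂ) * z with hwdef
  have ht0 : 0 ≤ t := norm_nonneg z
  have hNpos : (0:ℝ) < N := by exact_mod_cast hN
  have hw : ‖w‖ = N * t := by
    rw [hwdef, norm_mul, Complex.norm_natCast]
  have hstir := stirling_lb N hN
  have hEpos : (0:ℝ) < Real.exp N / Real.sqrt (2 * Real.pi * N) := by
    have : (0:ℝ) < Real.sqrt (2 * Real.pi * N) := Real.sqrt_pos.mpr (by positivity)
    positivity
  by_cases hz : t ≤ 1
  · simp only [if_pos hz]
    have hsum : Summable (fun n => w ^ n / (n.factorial : ℂ)) :=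
      NormedSpace.expSeries_div_summable w
    have hexp : Complex.exp w = ∑' n : ℕ, w ^ n / (n.factorial : ℂ) := by
      rw [Complex.exp_eq_exp_ℂ, NormedSpace.exp_eq_tsum_div]
    have hsplit : eC N w - Complex.exp w = -∑' j : ℕ, w ^ (j + N) / ((j + N).factorial : ℂ) := by
      rw [hexp, ← hsum.sum_add_tsum_nat_add N, eC]
      ring
    set q : ℝ := N * t / (N + 1) with hq
    have hq0 : 0 ≤ q := by positivity
    have hq1 : q < 1 := by
      rw [hq, div_lt_one (by positivity)]
      nlinarith
    have hgsum : Summable (fun j : ℕ => (N:ℝ)^N * t^N / N.factorial * q ^ j) :=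
      (summable_geometric_of_lt_one hq0 hq1).mul_left _
    have hterm : ∀ j : ℕ, ‖w ^ (j + N) / ((j + N).factorial : ℂ)‖
        ≤ (N:ℝ)^N * t^N / N.factorial * q ^ j := by
      intro j
      have hfac : (N.factorial : ℝ) * ((N:ℝ) + 1) ^ j ≤ ((j + N).factorial : ℝ) := by
        have h := Nat.factorial_mul_pow_le_factorial (m := N) (n := j)
        calc (N.factorial : ℝ) * ((N:ℝ) + 1) ^ j = ((N.factorial * (N+1)^j : ℕ) : ℝ) := by
              push_cast; ring
          _ ≤ ((N + j).factorial : ℝ) := by exact_mod_cast h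
          _ = ((j + N).factorial : ℝ) := by rw [Nat.add_comm]
      rw [norm_div, norm_pow, hw, Complex.norm_natCast]
      have hfpos : (0:ℝ) < ((j+N).factorial : ℝ) := by positivity
      rw [div_le_iff₀ hfpos]
      have key : ((N:ℝ) * t) ^ (j + N) =
          (N:ℝ)^N * t^N / N.factorial * q ^ j * ((N.factorial : ℝ) * ((N:ℝ)+1)^j) := by
        rw [pow_add, hq, div_pow, mul_pow, mul_pow]
        have hf0 : (N.factorial : ℝ) ≠ 0 := by positivity
        have h1 : ((N:ℝ)+1)^j ≠ 0 := by positivity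
        field_simp
      rw [key]
      apply mul_le_mul_of_nonneg_left hfac
      positivity
    have habs : ‖eC N w - Complex.exp w‖
        ≤ ∑' j : ℕ, (N:ℝ)^N * t^N / N.factorial * q ^ j := by
      rw [hsplit, norm_neg]
      have hns : Summable (fun j : ℕ => ‖w ^ (j + N) / ((j + N).factorial : ℂ)‖) :=
        hgsum.of_nonneg_of_le (fun j => norm_nonneg _) (fun j => hterm j)
      calc ‖∑' j : ℕ, w ^ (j + N) / ((j + N).factorial : ℂ)‖
          ≤ ∑' j : ℕ, ‖w ^ (j + N) / ((j + N).factorial : ℂ)‖ := norm_tsum_le_tsum_norm hns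
        _ ≤ ∑' j : ℕ, (N:ℝ)^N * t^N / N.factorial * q ^ j :=
            Summable.tsum_le_tsum (fun j => hterm j) hns hgsum
    have hgeo : ∑' j : ℕ, (N:ℝ)^N * t^N / N.factorial * q ^ j
        = (N:ℝ)^N * t^N / N.factorial * (1 - q)⁻¹ := by
      rw [tsum_mul_left, tsum_geometric_of_lt_one hq0 hq1]
    have hden : (0:ℝ) < (N:ℝ) * (1 - t) + 1 := by nlinarith
    have hinv : (1 - q)⁻¹ = ((N:ℝ) + 1) / ((N:ℝ) * (1 - t) + 1) := by
      rw [hq, show (1 - (N:ℝ)*t/((N:ℝ)+1)) = ((N:ℝ)*(1-t)+1)/((N:ℝ)+1) by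
        field_simp; ring, inv_div]
    refine habs.trans ?_
    rw [hgeo, hinv]
    have hfin : (N:ℝ)^N * t^N / N.factorial * (((N:ℝ) + 1) / ((N:ℝ) * (1 - t) + 1))
        = (N:ℝ)^N / N.factorial * (t^N * (((N:ℝ) + 1) / ((N:ℝ) * (1 - t) + 1))) := by ring
    rw [hfin]
    have hmul : (0:ℝ) ≤ t^N * (((N:ℝ) + 1) / ((N:ℝ) * (1 - t) + 1)) := by positivity
    calc (N:ℝ)^N / N.factorial * (t^N * (((N:ℝ) + 1) / ((N:ℝ) * (1 - t) + 1)))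
        ≤ Real.exp N / Real.sqrt (2 * Real.pi * N) * (t^N * (((N:ℝ) + 1) / ((N:ℝ) * (1 - t) + 1))) :=
          mul_le_mul_of_nonneg_right hstir hmul
      _ = Real.exp N / Real.sqrt (2 * Real.pi * N) * t ^ N * (((N:ℝ) + 1) / ((N:ℝ) * (1 - t) + 1)) := by
          ring
  · push_neg at hz
    simp only [if_neg (not_le.mpr hz)]
    obtain ⟨m, rfl⟩ : ∃ m, N = m + 1 := ⟨N - 1, (Nat.succ_pred_eq_of_pos hN).symm⟩
    set N := m + 1 with hNdef
    have hNt : (m:ℝ) < (N:ℝ) * t := by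
      have h1 : (m:ℝ) + 1 = (N:ℝ) := by push_cast [hNdef]; ring
      nlinarith
    have hNt0 : (0:ℝ) < (N:ℝ) * t := by positivity
    set q : ℝ := (m:ℝ) / ((N:ℝ) * t) with hq
    have hq0 : 0 ≤ q := by positivity
    have hq1 : q < 1 := (div_lt_one hNt0).mpr hNt
    rw [sub_zero, eC]
    have step1 : ‖∑ ℓ ∈ Finset.range N, w ^ ℓ / (ℓ.factorial : ℂ)‖
        ≤ ∑ ℓ ∈ Finset.range N, ((N:ℝ) * t) ^ ℓ / ℓ.factorial := by
      refine (norm_sum_le _ _).trans ?_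
      apply Finset.sum_le_sum
      intro ℓ _
      rw [norm_div, norm_pow]
      simp only [hw, Complex.norm_natCast]
      exact le_of_eq rfl
    have hterm : ∀ j ∈ Finset.range N, ((N:ℝ) * t) ^ (N - 1 - j) / ((N - 1 - j).factorial : ℝ)
        ≤ ((N:ℝ) * t) ^ m / m.factorial * q ^ j := by
      intro j hj
      have hjm : j ≤ m := by
        have := Finset.mem_range.mp hj
        omega
      have hidx : N - 1 - j = m - j := by omega
      set i := m - j with hi
      have hji : j + i = m := by omega
      have hnat : (m.factorial : ℝ) ≤ (m:ℝ)^j * (i.factorial : ℝ) := by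
        have h1 : i.factorial * m.descFactorial j = m.factorial :=
          Nat.factorial_mul_descFactorial hjm
        have h2 : m.descFactorial j ≤ m ^ j := Nat.descFactorial_le_pow m j
        have : m.factorial ≤ m ^ j * i.factorial := by
          calc m.factorial = i.factorial * m.descFactorial j := h1.symm
            _ ≤ i.factorial * m ^ j := Nat.mul_le_mul_left _ h2
            _ = m ^ j * i.factorial := Nat.mul_comm _ _
        exact_mod_cast this
      rw [hidx]
      have hrhs : ((N:ℝ) * t) ^ m / m.factorial * q ^ j
          = ((N:ℝ) * t) ^ i * ((m:ℝ)^j / m.factorial) := by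
        rw [hq, div_pow, ← hji, pow_add]
        have : ((N:ℝ)*t)^j ≠ 0 := by positivity
        field_simp
      rw [hrhs]
      rw [div_le_iff₀ (by positivity : (0:ℝ) < (i.factorial : ℝ))]
      have hpow : (0:ℝ) ≤ ((N:ℝ) * t) ^ i := by positivity
      have h3 : (1:ℝ) * m.factorial ≤ (m:ℝ)^j * i.factorial := by
        rw [one_mul]; exact hnat
      have hmf : (0:ℝ) < (m.factorial : ℝ) := by positivity
      calc ((N:ℝ) * t) ^ i = ((N:ℝ) * t) ^ i * ((m.factorial : ℝ) / m.factorial) := by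
            rw [div_self hmf.ne', mul_one]
        _ ≤ ((N:ℝ) * t) ^ i * (((m:ℝ)^j * i.factorial) / m.factorial) := by
            gcongr
        _ = ((N:ℝ) * t) ^ i * ((m:ℝ)^j / m.factorial) * i.factorial := by ring
    have step2 : ∑ ℓ ∈ Finset.range N, ((N:ℝ) * t) ^ ℓ / ℓ.factorial
        ≤ ((N:ℝ) * t) ^ m / m.factorial * (1 - q)⁻¹ := by
      rw [← Finset.sum_range_reflect]
      calc ∑ j ∈ Finset.range N, ((N:ℝ) * t) ^ (N - 1 - j) / ((N - 1 - j).factorial : ℝ)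
          ≤ ∑ j ∈ Finset.range N, ((N:ℝ) * t) ^ m / m.factorial * q ^ j :=
            Finset.sum_le_sum hterm
        _ = ((N:ℝ) * t) ^ m / m.factorial * ∑ j ∈ Finset.range N, q ^ j := by
            rw [Finset.mul_sum]
        _ ≤ ((N:ℝ) * t) ^ m / m.factorial * (1 - q)⁻¹ := by
            apply mul_le_mul_of_nonneg_left _ (by positivity)
            rw [← tsum_geometric_of_lt_one hq0 hq1]
            exact Summable.sum_le_tsum _ (fun j _ => by positivity)
              (summable_geometric_of_lt_one hq0 hq1)
    have hden : (0:ℝ) < (N:ℝ) * (t - 1) + 1 := by nlinarith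
    have hdm : (N:ℝ) * (t - 1) + 1 = (N:ℝ) * t - m := by
      have h1 : (m:ℝ) + 1 = (N:ℝ) := by push_cast [hNdef]; ring
      linarith
    have hval : ((N:ℝ) * t) ^ m / m.factorial * (1 - q)⁻¹
        = (N:ℝ)^N * t^N / N.factorial * ((N:ℝ) / ((N:ℝ) * (t - 1) + 1)) := by
      rw [hq, show (1 - (m:ℝ)/((N:ℝ)*t)) = ((N:ℝ)*t - m)/((N:ℝ)*t) by field_simp, inv_div,
        hdm]
      have hfacN : (N.factorial : ℝ) = (N:ℝ) * m.factorial := by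
        rw [hNdef, Nat.factorial_succ]; push_cast; ring
      have hmf : (m.factorial : ℝ) ≠ 0 := by positivity
      have hNtN : ((N:ℝ) * t) ^ N = ((N:ℝ)*t)^m * ((N:ℝ)*t) := by
        rw [hNdef]; rw [pow_succ]
      have : (N:ℝ)^N * t^N = ((N:ℝ)*t)^m * ((N:ℝ)*t) := by
        rw [← hNtN, mul_pow]
      rw [this, hfacN]
      have h1 : ((N:ℝ)*t - m) ≠ 0 := by rw [← hdm]; exact hden.ne'
      field_simp
    calc ‖∑ ℓ ∈ Finset.range N, w ^ ℓ / (ℓ.factorial : ℂ)‖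
        ≤ ∑ ℓ ∈ Finset.range N, ((N:ℝ) * t) ^ ℓ / ℓ.factorial := step1
      _ ≤ ((N:ℝ) * t) ^ m / m.factorial * (1 - q)⁻¹ := step2
      _ = (N:ℝ)^N * t^N / N.factorial * ((N:ℝ) / ((N:ℝ) * (t - 1) + 1)) := hval
      _ = (N:ℝ)^N / N.factorial * (t^N * ((N:ℝ) / ((N:ℝ) * (t - 1) + 1))) := by ring
      _ ≤ Real.exp N / Real.sqrt (2 * Real.pi * N) *
            (t^N * ((N:ℝ) / ((N:ℝ) * (t - 1) + 1))) := by
          apply mul_le_mul_of_nonneg_right hstir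
          positivity
      _ = Real.exp N / Real.sqrt (2 * Real.pi * N) * t ^ N *
            ((N:ℝ) / ((N:ℝ) * (t - 1) + 1)) := by ring
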